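/- Let g(x) ∈ F_q[x] be a monic divisor of x^n - 1 of degree n-k. Let C_A be the cyclic code of length n over F_q generated by g(x), and let C̄_A be the cyclic code of length n over F_{q^d} generated by the same polynomial g(x), where d is the multiplicative order of q modulo n. Then the minimum Hamming distances of C_A and C̄_A are equal. -/
import Mathlib


noncomputable section

open Polynomial
open scoped Pointwise

/-- The cyclic code of length `n` over `K` whose complete defining set is `Z ⊆ L`,
where `L` is an extension of `K` containing the `n`-th roots of unity:
codewords are those `c` whose associated polynomial vanishes on `Z`. -/
def cyclicCodeOn (K L : Type) [Field K] [Field L] [Algebra K L]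
    (n : ℕ) (Z : Set L) : Submodule K (Fin n → K) where
  carrier := {c | ∀ β ∈ Z, ∑ i : Fin n, algebraMap K L (c i) * β ^ (i : ℕ) = 0}
  add_mem' := by
    intro a b ha hb β hβ
    simp only [Pi.add_apply, map_add, add_mul, Finset.sum_add_distrib]
    rw [ha β hβ, hb β hβ, add_zero]
  zero_mem' := by intro β hβ; simp
  smul_mem' := by
    intro r a ha β hβ
    simp only [Pi.smul_apply, smul_eq_mul, map_mul, mul_assoc, ← Finset.mul_sum]
    rw [ha β hβ, mul_zero]

/-- Cyclic code of length `n` over `F` with complete defining set `Z ⊆ F`. -/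
abbrev cyclicCode (F : Type) [Field F] (n : ℕ) (Z : Set F) : Submodule F (Fin n → F) :=
  cyclicCodeOn F F n Z

/-- The dual code of a code `C ⊆ F^n` (under the standard inner product). -/
def dualSet (F : Type) [Field F] (n : ℕ) (C : Set (Fin n → F)) : Set (Fin n → F) :=
  {v | ∀ c ∈ C, ∑ i : Fin n, v i * c i = 0}

open Classical in
/-- Hamming weight of a vector. -/
def wt {F : Type} [Zero F] {n : ℕ} (c : Fin n → F) : ℕ :=
  (Finset.univ.filter (fun i => c i ≠ 0)).card

/-- `d` is the minimum Hamming distance (= minimum nonzero weight) of the code `C`. -/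
def IsMinDist {F : Type} [Zero F] {n : ℕ} (C : Set (Fin n → F)) (d : ℕ) : Prop :=
  (∃ c ∈ C, c ≠ 0 ∧ wt c = d) ∧ ∀ c ∈ C, c ≠ 0 → d ≤ wt c

open Classical in
/-- `C` has `(r, δ)`-locality: every coordinate lies in a recovery set `S` of size
at most `r + δ - 1` such that the punctured code `C|_S` has minimum distance `≥ δ`. -/
def HasLocality {F : Type} [Zero F] {n : ℕ} (C : Set (Fin n → F)) (r δ : ℕ) : Prop :=
  ∀ i : Fin n, ∃ S : Finset (Fin n), i ∈ S ∧ S.card ≤ r + δ - 1 ∧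
    ∀ c ∈ C, ∀ c' ∈ C, (∃ j ∈ S, c j ≠ c' j) →
      δ ≤ (S.filter (fun j => c j ≠ c' j)).card

/-- The polynomial `c₀ + c₁ x + ⋯ + c_{n-1} x^{n-1}` associated to a vector. -/
def vecPoly {F : Type} [Semiring F] {n : ℕ} (c : Fin n → F) : Polynomial F :=
  ∑ i : Fin n, Polynomial.C (c i) * Polynomial.X ^ (i : ℕ)

/-- The cyclic code of length `n` generated by `g(x)` (a divisor of `x^n - 1`). -/
def codeOfGen (F : Type) [Field F] (n : ℕ) (g : Polynomial F) : Set (Fin n → F) :=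
  {c | g ∣ vecPoly c}

/-- Ceiling division `⌈a / b⌉` on naturals. -/
def ceilDiv' (a b : ℕ) : ℕ := (a + b - 1) / b

/-- The code parameters meet the Singleton-like bound for `(r, δ)`-LRCs:
`d = n - k - (⌈k/r⌉ - 1)(δ - 1) + 1`. -/
def SingletonOpt (n k r δ d : ℕ) : Prop :=
  d = n - k - (ceilDiv' k r - 1) * (δ - 1) + 1

section aux
variable {K L : Type} [Field K] [Field L] [Algebra K L] {n : ℕ}

lemma vecPoly_map (v : Fin n → K) :
    vecPoly (fun i => algebraMap K L (v i)) = (vecPoly v).map (algebraMap K L) := by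
  simp [vecPoly, Polynomial.map_sum]

lemma wt_map (v : Fin n → K) : wt (fun i => algebraMap K L (v i)) = wt v := by
  classical
  unfold wt
  congr 1
  ext i
  simp [_root_.map_eq_zero]

/-- Upward: a codeword over `K` maps to a codeword over `L` of the same weight. -/
lemma exists_up (g : Polynomial K) (v : Fin n → K) (hv : g ∣ vecPoly v) :
    ∃ c : Fin n → L, (g.map (algebraMap K L)) ∣ vecPoly c ∧ (v ≠ 0 → c ≠ 0) ∧ wt c = wt v := by
  refine ⟨fun i => algebraMap K L (v i), ?_, ?_, wt_map v⟩
  · rw [vecPoly_map]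
    exact Polynomial.map_dvd _ hv
  · intro hv0 h
    apply hv0
    funext i
    have := congrFun h i
    simpa [_root_.map_eq_zero] using this

/-- Downward: from a nonzero codeword over `L` we get a nonzero codeword over `K`
of weight at most that of the original one. -/
lemma exists_down [Finite L] (g : Polynomial K) (hg : g.Monic)
    (c : Fin n → L) (hc : (g.map (algebraMap K L)) ∣ vecPoly c) (hc0 : c ≠ 0) :
    ∃ v : Fin n → K, g ∣ vecPoly v ∧ v ≠ 0 ∧ wt v ≤ wt c := by
  classical
  have : Module.Finite K L := Module.Finite.of_finite
  let b := Module.Free.chooseBasis K L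
  set ι := Module.Free.ChooseBasisIndex K L
  -- component vectors
  set v : ι → Fin n → K := fun j i => b.repr (c i) j with hv
  -- decomposition of vecPoly c
  have hdec : vecPoly c = ∑ j : ι, b j • ((vecPoly (v j)).map (algebraMap K L)) := by
    calc vecPoly c
        = ∑ i : Fin n, (∑ j : ι, Polynomial.C (b j * algebraMap K L (v j i)))
            * Polynomial.X ^ (i : ℕ) := by
          refine Finset.sum_congr rfl fun i _ => ?_
          congr 1
          rw [← map_sum Polynomial.C]
          congr 1
          conv_lhs => rw [← Module.Basis.sum_repr b (c i)]
          exact Finset.sum_congr rfl fun j _ => by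
            rw [Algebra.smul_def, mul_comm]
      _ = ∑ i : Fin n, ∑ j : ι,
            Polynomial.C (b j * algebraMap K L (v j i)) * Polynomial.X ^ (i : ℕ) := by
          simp [Finset.sum_mul]
      _ = ∑ j : ι, ∑ i : Fin n,
            Polynomial.C (b j * algebraMap K L (v j i)) * Polynomial.X ^ (i : ℕ) :=
          Finset.sum_comm
      _ = ∑ j : ι, b j • ((vecPoly (v j)).map (algebraMap K L)) := by
          refine Finset.sum_congr rfl fun j _ => ?_
          rw [← vecPoly_map, vecPoly, Finset.smul_sum]
          refine Finset.sum_congr rfl fun i _ => ?_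
          rw [Polynomial.smul_eq_C_mul, ← mul_assoc, ← Polynomial.C_mul]
  -- the remainders vanish
  set r : ι → Polynomial K := fun j => (vecPoly (v j)) %ₘ g with hrdef
  have hmod : ∑ j : ι, b j • ((r j).map (algebraMap K L)) = 0 := by
    have h0 : (vecPoly c) %ₘ (g.map (algebraMap K L)) = 0 :=
      (Polynomial.modByMonic_eq_zero_iff_dvd (hg.map _)).2 hc
    calc ∑ j : ι, b j • ((r j).map (algebraMap K L))
        = ∑ j : ι, b j • Polynomial.modByMonicHom (g.map (algebraMap K L))
            ((vecPoly (v j)).map (algebraMap K L)) := by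
          refine Finset.sum_congr rfl fun j _ => ?_
          rw [Polynomial.modByMonicHom_apply, hrdef, Polynomial.map_modByMonic _ hg]
      _ = Polynomial.modByMonicHom (g.map (algebraMap K L))
            (∑ j : ι, b j • ((vecPoly (v j)).map (algebraMap K L))) := by
          rw [map_sum]
          exact Finset.sum_congr rfl fun j _ => (map_smul _ _ _).symm
      _ = 0 := by rw [← hdec, Polynomial.modByMonicHom_apply, h0]
  have hrz : ∀ j, r j = 0 := by
    intro j
    ext m
    have hcoeff := congrArg (fun p => Polynomial.coeff p m) hmod
    simp only [Polynomial.finset_sum_coeff, Polynomial.coeff_smul, Polynomial.coeff_map,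
      smul_eq_mul, Polynomial.coeff_zero] at hcoeff
    have hsum : ∑ j : ι, ((r j).coeff m) • b j = 0 := by
      rw [← hcoeff]
      exact Finset.sum_congr rfl fun j _ => by rw [Algebra.smul_def, mul_comm]
    have := Fintype.linearIndependent_iff.mp b.linearIndependent
      (fun j => (r j).coeff m) hsum j
    simpa using this
  have hdvd' : ∀ j, g ∣ vecPoly (v j) := fun j =>
    (Polynomial.modByMonic_eq_zero_iff_dvd hg).1 (hrz j)
  -- find a nonzero component
  obtain ⟨i₀, hi₀⟩ : ∃ i, c i ≠ 0 := by
    by_contra h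
    push_neg at h
    exact hc0 (funext fun i => h i)
  have hrep : b.repr (c i₀) ≠ 0 := fun h => hi₀ (by
    have := congrArg b.repr.symm h
    simpa using this)
  obtain ⟨j₀, hj₀⟩ : ∃ j, b.repr (c i₀) j ≠ 0 := by
    by_contra h
    push_neg at h
    exact hrep (Finsupp.ext h)
  refine ⟨v j₀, hdvd' j₀, ?_, ?_⟩
  · intro h
    exact hj₀ (by simpa [hv] using congrFun h i₀)
  · unfold wt
    apply Finset.card_le_card
    intro i hi
    simp only [Finset.mem_filter, Finset.mem_univ, true_and] at hi ⊢
    intro hci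
    apply hi
    simp [hv, hci]

end aux

/-- A cyclic code over `F_q` and the cyclic code over `F_{q^d}` generated
by the same polynomial have the same minimum distance, `d` being the order of `q` mod `n`. -/
theorem stmt1 (K L : Type) [Field K] [Fintype K] [Field L] [Fintype L] [Algebra K L]
    (n d : ℕ) (hn : 0 < n) (hd : 0 < d)
    (hcop : Nat.Coprime n (Fintype.card K))
    (hcard : Fintype.card L = Fintype.card K ^ d)
    (hord : Fintype.card K ^ d ≡ 1 [MOD n])
    (hmin : ∀ m, 0 < m → Fintype.card K ^ m ≡ 1 [MOD n] → d ≤ m)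
    (g : Polynomial K) (hg : g.Monic) (hdvd : g ∣ Polynomial.X ^ n - 1)
    (dd : ℕ) :
    IsMinDist (codeOfGen K n g) dd ↔
      IsMinDist (codeOfGen L n (g.map (algebraMap K L))) dd := by
  constructor
  · rintro ⟨⟨v, hvC, hv0, hvwt⟩, hlb⟩
    constructor
    · obtain ⟨c, hcC, hc0, hcwt⟩ := exists_up (L := L) g v hvC
      exact ⟨c, hcC, hc0 hv0, hcwt.trans hvwt⟩
    · intro c hcC hc0
      obtain ⟨w, hwC, hw0, hwle⟩ := exists_down g hg c hcC hc0
      exact (hlb w hwC hw0).trans hwle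
  · rintro ⟨⟨c, hcC, hc0, hcwt⟩, hlb⟩
    have hlbK : ∀ v ∈ codeOfGen K n g, v ≠ 0 → dd ≤ wt v := by
      intro v hvC hv0
      obtain ⟨c', hc'C, hc'0, hc'wt⟩ := exists_up (L := L) g v hvC
      rw [← hc'wt]
      exact hlb c' hc'C (hc'0 hv0)
    refine ⟨?_, hlbK⟩
    obtain ⟨w, hwC, hw0, hwle⟩ := exists_down g hg c hcC hc0
    exact ⟨w, hwC, hw0, le_antisymm (hwle.trans_eq hcwt) (hlbK w hwC hw0)⟩
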